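/- Let h be a Cartan subalgebra of g containing a Cartan subalgebra h_r of r, and let h_p be the B-orthocomplement of h_r in h. Then h = h_r ⊕ h_p, h_r = h ∩ r, and h_p = h ∩ p. -/

import Mathlib

/-- A Lie algebra is reductive if its radical coincides with its center. -/
def LieAlgebra.IsReductive' (R L : Type*) [CommRing R] [LieRing L] [LieAlgebra R L] : Prop :=
  LieAlgebra.radical R L = LieAlgebra.center R L

/-- If `h` is a Cartan subalgebra of `g` containing a Cartan subalgebra
`h_r` of `r`, and `h_p` is the `B`-orthocomplement of `h_r` in `h`, then
`h = h_r ⊕ h_p`, `h_r = h ∩ r` and `h_p = h ∩ p`. -/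
theorem stmt1 (g : Type*) [LieRing g] [LieAlgebra ℂ g] [Module.Finite ℂ g]
    [LieAlgebra.IsSemisimple ℂ g]
    (B : LinearMap.BilinForm ℂ g) (hBsymm : B.IsSymm)
    (hBinv : ∀ x y z : g, B ⁅x, y⁆ z = B x ⁅y, z⁆)
    (hBnd : B.Nondegenerate)
    (r : LieSubalgebra ℂ g) (hred : LieAlgebra.IsReductive' ℂ r)
    (hBr : (B.restrict r.toSubmodule).Nondegenerate)
    (p : Submodule ℂ g) (hp : p = B.orthogonal r.toSubmodule)
    -- `h_r` a Cartan subalgebra of `r`, regarded inside `g`: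
    (hr' : LieSubalgebra ℂ r) (hhr' : hr'.IsCartanSubalgebra)
    (hr : LieSubalgebra ℂ g) (hhr : hr = hr'.map r.incl)
    -- `h` a Cartan subalgebra of `g` containing `h_r`:
    (h : LieSubalgebra ℂ g) (hh : h.IsCartanSubalgebra) (hrh : hr ≤ h)
    -- `h_p` the `B`-orthocomplement of `h_r` in `h`:
    (hpsub : Submodule ℂ g)
    (hhp : hpsub = h.toSubmodule ⊓ B.orthogonal hr.toSubmodule) :
    (hr.toSubmodule ⊔ hpsub = h.toSubmodule ∧ hr.toSubmodule ⊓ hpsub = ⊥) ∧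
      hr.toSubmodule = h.toSubmodule ⊓ r.toSubmodule ∧
      hpsub = h.toSubmodule ⊓ p := by
  classical
  haveI := hh
  haveI := hhr'
  haveI : FiniteDimensional ℂ g := inferInstance
  haveI : FiniteDimensional ℂ r := by
    have : FiniteDimensional ℂ r.toSubmodule := inferInstance
    exact this
  haveI : IsNoetherian ℂ r := IsNoetherian.iff_fg.2 inferInstance
  -- `hr ≤ r` on the level of submodules
  have hrr : hr.toSubmodule ≤ r.toSubmodule := by
    intro x hx
    rw [LieSubalgebra.mem_toSubmodule] at hx
    rw [hhr, LieSubalgebra.mem_map] at hx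
    obtain ⟨y, -, rfl⟩ := hx
    exact (y : r).2
  -- elements of `hr'` coerce into `h`
  have htmem : ∀ t : hr', ((t : r) : g) ∈ h := by
    intro t
    apply hrh
    rw [hhr, LieSubalgebra.mem_map]
    exact ⟨(t : r), t.2, rfl⟩
  -- coercion of iterated action of `hr'` on `r` into `g`
  have hsingle : ∀ (t : hr') (w : r),
      ((LieModule.toEnd ℂ hr' r t w : r) : g)
        = LieModule.toEnd ℂ h g ⟨((t : r) : g), htmem t⟩ (w : g) := by
    intro t w
    simp only [LieModule.toEnd_apply_apply, LieSubalgebra.coe_bracket_of_module,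
      LieSubalgebra.coe_bracket]
  have hcoeF : ∀ (t : hr') (m : ℕ) (w : r),
      (((LieModule.toEnd ℂ hr' r t ^ m) w : r) : g)
        = (LieModule.toEnd ℂ h g ⟨((t : r) : g), htmem t⟩ ^ m) (w : g) := by
    intro t m
    induction m with
    | zero => intro w; simp
    | succ n ih =>
      intro w
      rw [pow_succ, pow_succ, Module.End.mul_apply, Module.End.mul_apply, ih, hsingle]
  -- iterated invariance of `B`
  have hBiter : ∀ (t' : h) (m : ℕ) (a b : g),
      B a ((LieModule.toEnd ℂ h g t' ^ m) b)
        = (-1 : ℂ) ^ m * B ((LieModule.toEnd ℂ h g t' ^ m) a) b := by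
    intro t' m
    have hstep : ∀ u v : g,
        B u (LieModule.toEnd ℂ h g t' v) = - B (LieModule.toEnd ℂ h g t' u) v := by
      intro u v
      have h1 : B ⁅u, (t' : g)⁆ v = B u ⁅(t' : g), v⁆ := hBinv u (t' : g) v
      have h2 : ∀ w : g, LieModule.toEnd ℂ h g t' w = ⁅(t' : g), w⁆ := by
        intro w
        simp [LieModule.toEnd_apply_apply, LieSubalgebra.coe_bracket_of_module]
      rw [h2, h2, ← h1, ← lie_skew, map_neg, LinearMap.neg_apply]
    induction m with
    | zero => intro a b; simp
    | succ n ih =>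
      intro a b
      have hcomm : (LieModule.toEnd ℂ h g t' ^ n) (LieModule.toEnd ℂ h g t' a)
          = (LieModule.toEnd ℂ h g t' ^ (n + 1)) a := by
        rw [← Module.End.mul_apply, ← pow_succ]
      have e1 : (LieModule.toEnd ℂ h g t' ^ (n + 1)) b
          = LieModule.toEnd ℂ h g t' ((LieModule.toEnd ℂ h g t' ^ n) b) := by
        rw [pow_succ', Module.End.mul_apply]
      rw [e1, hstep, ih, hcomm]
      ring
  -- membership of elements of `h` in the zero root space of `g`
  have hzeroh : ∀ x ∈ h, ∀ t' : h, ∃ k : ℕ, (LieModule.toEnd ℂ h g t' ^ k) x = 0 := by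
    intro x hx t'
    exact (LieAlgebra.mem_zeroRootSubalgebra ℂ g h x).mp
      (LieAlgebra.le_zeroRootSubalgebra ℂ g h hx) t'
  -- ★ the key lemma: an element of `h` orthogonal to `hr` is orthogonal to all of `r`
  have star : ∀ x ∈ h, (∀ w ∈ hr.toSubmodule, B x w = 0) →
      ∀ y ∈ r.toSubmodule, B x y = 0 := by
    intro x hx hxw y hy
    have hy' : (⟨y, hy⟩ : r) ∈ ⨆ χ : hr' → ℂ, LieModule.genWeightSpace r χ := by
      rw [LieModule.iSup_genWeightSpace_eq_top ℂ hr' r]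
      trivial
    have main : ∀ (χ : hr' → ℂ) (z : r), z ∈ LieModule.genWeightSpace r χ →
        B x (z : g) = 0 := by
      intro χ z hz
      by_cases hχ : χ = 0
      · -- zero weight: `z` lies in `hr'`, hence in `hr`
        subst hχ
        have hz' : z ∈ LieAlgebra.zeroRootSubalgebra ℂ r hr' := by
          rw [LieAlgebra.mem_zeroRootSubalgebra]
          intro t
          obtain ⟨k, hk⟩ := (LieModule.mem_genWeightSpace r _ z).mp hz t
          exact ⟨k, by simpa using hk⟩
        rw [LieAlgebra.zeroRootSubalgebra_eq_of_is_cartan] at hz'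
        have hzhr : (z : g) ∈ hr.toSubmodule := by
          rw [LieSubalgebra.mem_toSubmodule, hhr, LieSubalgebra.mem_map]
          exact ⟨z, hz', rfl⟩
        exact hxw _ hzhr
      · -- nonzero weight: `z` is in the image of a power of the action of some `t`
        obtain ⟨t, ht⟩ : ∃ t, χ t ≠ 0 := Function.ne_iff.mp hχ
        set f : Module.End ℂ r := LieModule.toEnd ℂ hr' r t with hf
        set E : Submodule ℂ r := f.maxGenEigenspace (χ t) with hE
        have hzE : z ∈ E := by
          obtain ⟨k, hk⟩ := (LieModule.mem_genWeightSpace r χ z).mp hz t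
          exact (Module.End.mem_maxGenEigenspace f (χ t) z).mpr ⟨k, hk⟩
        have hMaps : Set.MapsTo f E E :=
          Module.End.mapsTo_maxGenEigenspace_of_comm rfl (χ t)
        set f' : E →ₗ[ℂ] E := f.restrict hMaps with hf'
        have hinj : Function.Injective f' := by
          intro a b hab
          have hd : f' (a - b) = 0 := by rw [map_sub, hab, sub_self]
          have hd0 : f ((a - b : E) : r) = 0 := by
            have := congrArg (Subtype.val) hd
            exact this
          have hdE0 : ((a - b : E) : r) ∈ f.maxGenEigenspace 0 := by
            rw [Module.End.mem_maxGenEigenspace]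
            exact ⟨1, by simpa using hd0⟩
          have hdisj : Disjoint (f.maxGenEigenspace (χ t)) (f.maxGenEigenspace 0) :=
            Module.End.disjoint_genEigenspace f ht ⊤ ⊤
          have hcv : ((a - b : E) : r) = 0 :=
            Submodule.disjoint_def.mp hdisj _ (a - b).2 hdE0
          have : (a - b : E) = 0 := Subtype.ext hcv
          exact sub_eq_zero.mp this
        have hsurj : Function.Surjective f' := LinearMap.injective_iff_surjective.mp hinj
        have hsurjk : ∀ k : ℕ, Function.Surjective (⇑(f' ^ k)) := by
          intro k
          induction k with
          | zero => simpa [Module.End.coe_one] using Function.surjective_id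
          | succ n ihn =>
            rw [pow_succ, Module.End.mul_eq_comp, LinearMap.coe_comp]
            exact ihn.comp hsurj
        obtain ⟨k, hk⟩ := hzeroh x hx ⟨((t : r) : g), htmem t⟩
        obtain ⟨z₀, hz₀⟩ := hsurjk k ⟨z, hzE⟩
        -- relate `f' ^ k` to `f ^ k`
        have hpowcoe : ∀ (m : ℕ) (w : E), (((f' ^ m) w : E) : r) = (f ^ m) (w : r) := by
          intro m
          induction m with
          | zero => intro w; simp
          | succ n ihn =>
            intro w
            rw [pow_succ, pow_succ, Module.End.mul_apply, Module.End.mul_apply, ihn]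
            simp [hf', LinearMap.restrict_apply]
            rfl
        have hzcoe : (z : g) = ((LieModule.toEnd ℂ h g ⟨((t : r) : g), htmem t⟩ ^ k)
            ((z₀ : r) : g)) := by
          have hfz : ((f ^ k) (z₀ : r) : r) = z := by
            rw [← hpowcoe k z₀, hz₀]
          rw [← hfz, hf, hcoeF]
        rw [hzcoe, hBiter, hk]
        simp
    have := LieSubmodule.iSup_induction (motive := fun z : ↥r => B x (z : g) = 0)
      _ hy' main (by simp)
      (fun a b ha hb => by
        show B x ((a + b : r) : g) = 0
        have hab : ((a + b : r) : g) = (a : g) + (b : g) := rfl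
        rw [hab, map_add, ha, hb, add_zero])
    simpa using this
  -- nondegeneracy of `B` restricted to `hr`
  have hndhr : (B.restrict hr.toSubmodule).Nondegenerate := by
    refine (LinearMap.IsRefl.nondegenerate_iff_separatingLeft (B := B.restrict hr.toSubmodule)
      (fun a b hab => hBsymm.isRefl _ _ hab)).2 ?_
    intro m hm
    have hmh : (m : g) ∈ h := hrh ((LieSubalgebra.mem_toSubmodule hr).mp m.2)
    have hBxr : ∀ y ∈ r.toSubmodule, B (m : g) y = 0 := by
      refine star (m : g) hmh ?_
      intro w hw
      simpa using hm ⟨w, hw⟩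
    have : (⟨(m : g), hrr m.2⟩ : r.toSubmodule) = 0 := by
      apply hBr.1
      rintro ⟨n, hn⟩
      simpa using hBxr n hn
    have hm0 : (m : g) = 0 := by
      simpa using congrArg Subtype.val this
    exact Subtype.ext hm0
  have hcompl : IsCompl hr.toSubmodule (B.orthogonal hr.toSubmodule) :=
    B.isCompl_orthogonal_of_restrict_nondegenerate hBsymm.isRefl hndhr
  have hrsub_le_h : hr.toSubmodule ≤ h.toSubmodule := fun x hx =>
    (LieSubalgebra.mem_toSubmodule h).mpr (hrh ((LieSubalgebra.mem_toSubmodule hr).mp hx))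
  subst hhp
  subst hp
  refine ⟨⟨?_, ?_⟩, ?_, ?_⟩
  · -- hr ⊔ hp = h
    rw [inf_comm, ← sup_inf_assoc_of_le _ hrsub_le_h, hcompl.sup_eq_top, top_inf_eq]
  · -- hr ⊓ hp = ⊥
    refine le_antisymm ?_ bot_le
    have h1 : hr.toSubmodule ⊓ (h.toSubmodule ⊓ B.orthogonal hr.toSubmodule)
        ≤ hr.toSubmodule ⊓ B.orthogonal hr.toSubmodule :=
      le_inf inf_le_left (le_trans inf_le_right inf_le_right)
    rwa [hcompl.disjoint.eq_bot] at h1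
  · -- hr = h ⊓ r
    refine le_antisymm (le_inf hrsub_le_h hrr) ?_
    intro x hx
    obtain ⟨hxh, hxr⟩ := Submodule.mem_inf.mp hx
    rw [LieSubalgebra.mem_toSubmodule] at hxh hxr
    have hx0 : (⟨x, hxr⟩ : r) ∈ LieAlgebra.zeroRootSubalgebra ℂ r hr' := by
      rw [LieAlgebra.mem_zeroRootSubalgebra]
      intro t
      obtain ⟨k, hk⟩ := hzeroh x hxh ⟨((t : r) : g), htmem t⟩
      refine ⟨k, ?_⟩
      refine Subtype.coe_injective ?_
      show (((LieModule.toEnd ℂ hr' r t ^ k) ⟨x, hxr⟩ : r) : g) = ((0 : r) : g)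
      rw [hcoeF]
      simpa using hk
    rw [LieAlgebra.zeroRootSubalgebra_eq_of_is_cartan] at hx0
    rw [LieSubalgebra.mem_toSubmodule, hhr, LieSubalgebra.mem_map]
    exact ⟨⟨x, hxr⟩, hx0, rfl⟩
  · -- hp = h ⊓ p
    apply le_antisymm
    · -- h ⊓ orth(hr) ≤ h ⊓ orth(r)
      intro x hx
      obtain ⟨hxh, hxo⟩ := Submodule.mem_inf.mp hx
      refine Submodule.mem_inf.mpr ⟨hxh, ?_⟩
      rw [LinearMap.BilinForm.mem_orthogonal_iff]
      intro n hn
      have hxr : ∀ y ∈ r.toSubmodule, B x y = 0 := by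
        refine star x ((LieSubalgebra.mem_toSubmodule h).mp hxh) ?_
        intro w hw
        have := (LinearMap.BilinForm.mem_orthogonal_iff.mp hxo) w hw
        have hsym := hBsymm.eq w x
        rw [this] at hsym
        simpa using hsym.symm
      have := hxr n hn
      have hsym := hBsymm.eq x n
      rw [this] at hsym
      simpa using hsym.symm
    · -- h ⊓ orth(r) ≤ h ⊓ orth(hr)
      exact inf_le_inf_left _ (LinearMap.BilinForm.orthogonal_le hrr)
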